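/- Let S be a spider with q ≥ 3 legs all of length 2 (so n = 2q+1 vertices). Then every 3-rainbow separating path system of S, in which every edge is covered by paths of at least two distinct colors, has size at least 17(n−1)/16; consequently c_3(S) ≥ 17(n−1)/16 − 3. -/

import Mathlib

open SimpleGraph

/-- A path in a graph `G`: a walk that is a path, with its endpoints. -/
structure GPath {V : Type*} (G : SimpleGraph V) where
  a : V
  b : V
  walk : G.Walk a b
  isPath : walk.IsPath

/-- `P` is a `k`-rainbow separating path system of `G`: every pair of distinct
edges is separated by two paths of distinct colors. -/
def IsRSPS {V : Type*} (G : SimpleGraph V) (k : ℕ)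
    (P : Multiset (GPath G × Fin k)) : Prop :=
  ∀ e f : Sym2 V, e ∈ G.edgeSet → f ∈ G.edgeSet → e ≠ f →
    ∃ p ∈ P, ∃ q ∈ P, p.2 ≠ q.2 ∧
      e ∈ p.1.walk.edges ∧ f ∉ p.1.walk.edges ∧
      f ∈ q.1.walk.edges ∧ e ∉ q.1.walk.edges

/-- The `k`-rainbow separation number `c_k(G)`. -/
noncomputable def cRSPS {V : Type*} (G : SimpleGraph V) (k : ℕ) : ℕ :=
  sInf {m | ∃ P : Multiset (GPath G × Fin k), IsRSPS G k P ∧ Multiset.card P = m}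

/-- `P` is a weakly separating path system of `G`. -/
def IsWeakSep {V : Type*} (G : SimpleGraph V) (P : Multiset (GPath G)) : Prop :=
  ∀ e f : Sym2 V, e ∈ G.edgeSet → f ∈ G.edgeSet → e ≠ f →
    ∃ p ∈ P, (e ∈ p.walk.edges ∧ f ∉ p.walk.edges) ∨
      (f ∈ p.walk.edges ∧ e ∉ p.walk.edges)

/-- The weak separation number `wsp(G)`. -/
noncomputable def wsp {V : Type*} (G : SimpleGraph V) : ℕ :=
  sInf {m | ∃ P : Multiset (GPath G), IsWeakSep G P ∧ Multiset.card P = m}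

/-- `P` is a strongly separating path system of `G`. -/
def IsStrongSep {V : Type*} (G : SimpleGraph V) (P : Multiset (GPath G)) : Prop :=
  ∀ e f : Sym2 V, e ∈ G.edgeSet → f ∈ G.edgeSet → e ≠ f →
    ∃ p ∈ P, e ∈ p.walk.edges ∧ f ∉ p.walk.edges

/-- The strong separation number `ssp(G)`. -/
noncomputable def ssp {V : Type*} (G : SimpleGraph V) : ℕ :=
  sInf {m | ∃ P : Multiset (GPath G), IsStrongSep G P ∧ Multiset.card P = m}

/-- The spider with `q` legs, each of length 2: center `none`, legs
`none — some (i,0) — some (i,1)`. -/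
def spider2 (q : ℕ) : SimpleGraph (Option (Fin q × Fin 2)) :=
  SimpleGraph.fromRel (fun a b =>
    (a = none ∧ ∃ i : Fin q, b = some (i, 0)) ∨
    (∃ i : Fin q, a = some (i, 0) ∧ b = some (i, 1)))

namespace Stmt13

variable {q : ℕ}

abbrev VV (q : ℕ) := Option (Fin q × Fin 2)

def EE (i : Fin q) : Sym2 (VV q) := s(none, some (i, 0))
def FF (i : Fin q) : Sym2 (VV q) := s(some (i, 0), some (i, 1))

lemma EE_inj {i j : Fin q} : EE i = EE j ↔ i = j := by
  simp [EE, Sym2.eq_iff]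

lemma FF_inj {i j : Fin q} : FF i = FF j ↔ i = j := by
  constructor
  · intro h
    simp only [FF, Sym2.eq_iff, Option.some.injEq, Prod.mk.injEq] at h
    tauto
  · rintro rfl; rfl

lemma EE_ne_FF {i j : Fin q} : EE i ≠ FF j := by
  simp [EE, FF, Sym2.eq_iff]

lemma adj_iff {a b : VV q} : (spider2 q).Adj a b ↔
    ∃ i : Fin q, (a = none ∧ b = some (i, 0)) ∨ (b = none ∧ a = some (i, 0)) ∨
      (a = some (i, 0) ∧ b = some (i, 1)) ∨ (b = some (i, 0) ∧ a = some (i, 1)) := by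
  rw [spider2, SimpleGraph.fromRel_adj]
  constructor
  · rintro ⟨hne, h | h⟩
    · rcases h with ⟨h1, i, h2⟩ | ⟨i, h1, h2⟩
      · exact ⟨i, Or.inl ⟨h1, h2⟩⟩
      · exact ⟨i, Or.inr (Or.inr (Or.inl ⟨h1, h2⟩))⟩
    · rcases h with ⟨h1, i, h2⟩ | ⟨i, h1, h2⟩
      · exact ⟨i, Or.inr (Or.inl ⟨h1, h2⟩)⟩
      · exact ⟨i, Or.inr (Or.inr (Or.inr ⟨h1, h2⟩))⟩
  · rintro ⟨i, ⟨rfl, rfl⟩ | ⟨rfl, rfl⟩ | ⟨rfl, rfl⟩ | ⟨rfl, rfl⟩⟩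
    · exact ⟨by simp, Or.inl (Or.inl ⟨rfl, i, rfl⟩)⟩
    · exact ⟨by simp, Or.inr (Or.inl ⟨rfl, i, rfl⟩)⟩
    · exact ⟨by simp, Or.inl (Or.inr ⟨i, rfl, rfl⟩)⟩
    · exact ⟨by simp, Or.inr (Or.inr ⟨i, rfl, rfl⟩)⟩

lemma EE_mem_edgeSet (i : Fin q) : EE i ∈ (spider2 q).edgeSet := by
  rw [EE, SimpleGraph.mem_edgeSet, adj_iff]
  exact ⟨i, Or.inl ⟨rfl, rfl⟩⟩

lemma FF_mem_edgeSet (i : Fin q) : FF i ∈ (spider2 q).edgeSet := by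
  rw [FF, SimpleGraph.mem_edgeSet, adj_iff]
  exact ⟨i, Or.inr (Or.inr (Or.inl ⟨rfl, rfl⟩))⟩

lemma edge_cases {e : Sym2 (VV q)} (he : e ∈ (spider2 q).edgeSet) :
    ∃ i : Fin q, e = EE i ∨ e = FF i := by
  induction e using Sym2.ind with
  | _ a b =>
    rw [SimpleGraph.mem_edgeSet, adj_iff] at he
    obtain ⟨i, h⟩ := he
    refine ⟨i, ?_⟩
    rcases h with ⟨rfl, rfl⟩ | ⟨rfl, rfl⟩ | ⟨rfl, rfl⟩ | ⟨rfl, rfl⟩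
    · exact Or.inl rfl
    · exact Or.inl (Sym2.eq_swap)
    · exact Or.inr rfl
    · exact Or.inr (Sym2.eq_swap)



/-- Whether a vertex is in leg `i`. -/
def side (i : Fin q) (v : VV q) : Prop := v = some (i, 0) ∨ v = some (i, 1)

lemma side_iff_of_adj {i : Fin q} {a b : VV q} (h : (spider2 q).Adj a b)
    (hne : s(a, b) ≠ EE i) : (side i a ↔ side i b) := by
  rw [adj_iff] at h
  obtain ⟨j, h⟩ := h
  have hji : j ≠ i → True := fun _ => trivial
  rcases h with ⟨rfl, rfl⟩ | ⟨rfl, rfl⟩ | ⟨rfl, rfl⟩ | ⟨rfl, rfl⟩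
  · have : j ≠ i := by
      rintro rfl; exact hne rfl
    simp [side, this]
  · have : j ≠ i := by
      rintro rfl; exact hne Sym2.eq_swap
    simp [side, this]
  · by_cases hj : j = i <;> simp [side, hj]
  · by_cases hj : j = i <;> simp [side, hj]

lemma walk_side {i : Fin q} {a b : VV q} (W : (spider2 q).Walk a b)
    (hE : EE i ∉ W.edges) : ∀ v ∈ W.support, (side i v ↔ side i a) := by
  induction W with
  | nil => intro v hv; simp at hv; subst hv; rfl
  | @cons u c w h W ih =>
    intro v hv
    rw [SimpleGraph.Walk.edges_cons] at hE
    have h1 : s(u, c) ≠ EE i := by rintro hh; exact hE (hh ▸ List.mem_cons_self)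
    have h2 : EE i ∉ W.edges := fun hh => hE (List.mem_cons_of_mem _ hh)
    rw [SimpleGraph.Walk.support_cons, List.mem_cons] at hv
    rcases hv with rfl | hv
    · rfl
    · rw [ih h2 v hv]
      exact (side_iff_of_adj h h1).symm

lemma all_edges_FF {i : Fin q} {a b : VV q} (W : (spider2 q).Walk a b)
    (hE : EE i ∉ W.edges) (hF : FF i ∈ W.edges) : ∀ e ∈ W.edges, e = FF i := by
  have hsup := walk_side W hE
  have hi1 : some (i, 1) ∈ W.support := W.snd_mem_support_of_mem_edges hF
  have hsa : side i a := (hsup _ hi1).mp (Or.inr rfl)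
  intro e he
  obtain ⟨m, hm | hm⟩ := edge_cases (W.edges_subset_edgeSet he)
  · subst hm
    have : (none : VV q) ∈ W.support := W.fst_mem_support_of_mem_edges he
    have := (hsup _ this).mpr hsa
    rcases this with h | h <;> exact absurd h (by simp)
  · subst hm
    have : some (m, 1) ∈ W.support := W.snd_mem_support_of_mem_edges he
    have := (hsup _ this).mpr hsa
    rcases this with h | h
    · simp at h
    · simp only [Option.some.injEq, Prod.mk.injEq] at h
      rw [FF_inj.mpr h.1]

lemma mem_support_of_mem_edge {a b u : VV q} {e : Sym2 (VV q)}
    (W : (spider2 q).Walk a b) (he : e ∈ W.edges) (hu : u ∈ e) : u ∈ W.support := by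
  induction e using Sym2.ind with
  | _ x y =>
    rw [Sym2.mem_iff] at hu
    rcases hu with rfl | rfl
    · exact W.fst_mem_support_of_mem_edges he
    · exact W.snd_mem_support_of_mem_edges he

lemma edges_start_unique {v b : VV q} (W : (spider2 q).Walk v b) (h : W.IsPath) :
    ∀ e ∈ W.edges, ∀ e' ∈ W.edges, v ∈ e → v ∈ e' → e = e' := by
  induction W with
  | nil => intro e he; simp at he
  | @cons u c w hadj W ih =>
    rw [SimpleGraph.Walk.cons_isPath_iff] at h
    intro e he e' he' hv hv'
    rw [SimpleGraph.Walk.edges_cons, List.mem_cons] at he he'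
    have key : ∀ f ∈ W.edges, u ∉ f := by
      intro f hf huf
      exact h.2 (mem_support_of_mem_edge W hf huf)
    rcases he with rfl | he
    · rcases he' with rfl | he'
      · rfl
      · exact absurd hv' (key _ he')
    · exact absurd hv (key _ he)

lemma three_edges_at {a b u : VV q} (W : (spider2 q).Walk a b) (h : W.IsPath)
    {e1 e2 e3 : Sym2 (VV q)} (h1 : e1 ∈ W.edges) (h2 : e2 ∈ W.edges) (h3 : e3 ∈ W.edges)
    (h12 : e1 ≠ e2) (h13 : e1 ≠ e3) (h23 : e2 ≠ e3)
    (hu1 : u ∈ e1) (hu2 : u ∈ e2) (hu3 : u ∈ e3) : False := by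
  induction W with
  | nil => simp at h1
  | @cons x c w hadj W ih =>
    rw [SimpleGraph.Walk.cons_isPath_iff] at h
    rw [SimpleGraph.Walk.edges_cons, List.mem_cons] at h1 h2 h3
    -- at most one can be the head edge
    have key : ∀ f g : Sym2 (VV q), f ∈ W.edges → g ∈ W.edges → f ≠ g →
        u ∈ f → u ∈ g → u ∈ s(x, c) → False := by
      intro f g hf hg hfg huf hug hux
      rw [Sym2.mem_iff] at hux
      rcases hux with rfl | rfl
      · exact h.2 (mem_support_of_mem_edge W hf huf)
      · exact hfg (edges_start_unique W h.1 f hf g hg huf hug)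
    rcases h1 with rfl | h1
    · rcases h2 with rfl | h2
      · exact h12 rfl
      · rcases h3 with rfl | h3
        · exact h13 rfl
        · exact key _ _ h2 h3 h23 hu2 hu3 hu1
    · rcases h2 with rfl | h2
      · rcases h3 with rfl | h3
        · exact h23 rfl
        · exact key _ _ h1 h3 h13 hu1 hu3 hu2
      · rcases h3 with rfl | h3
        · exact key _ _ h1 h2 h12 hu1 hu2 hu3
        · exact ih h.1 h1 h2 h3



/-- The set of legs a path touches. -/
def legs (p : GPath (spider2 q)) : Finset (Fin q) :=
  Finset.univ.filter (fun i => EE i ∈ p.walk.edges ∨ FF i ∈ p.walk.edges)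

lemma mem_legs {p : GPath (spider2 q)} {i : Fin q} :
    i ∈ legs p ↔ EE i ∈ p.walk.edges ∨ FF i ∈ p.walk.edges := by
  simp [legs]

lemma EE_mem_of_two_legs {p : GPath (spider2 q)} {i j : Fin q}
    (hi : i ∈ legs p) (hj : j ∈ legs p) (hij : i ≠ j) : EE i ∈ p.walk.edges := by
  by_contra hE
  rw [mem_legs] at hi hj
  have hF : FF i ∈ p.walk.edges := hi.resolve_left hE
  have hall := all_edges_FF p.walk hE hF
  rcases hj with hj | hj
  · exact EE_ne_FF (hall _ hj)
  · exact hij (FF_inj.mp (hall _ hj)).symm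

lemma legs_card_le_two (p : GPath (spider2 q)) : (legs p).card ≤ 2 := by
  by_contra hc
  push_neg at hc
  obtain ⟨i, j, k, hi, hj, hk, hij, hik, hjk⟩ := Finset.two_lt_card_iff.mp hc
  have h1 := EE_mem_of_two_legs hi hj hij
  have h2 := EE_mem_of_two_legs hj hi (Ne.symm hij)
  have h3 := EE_mem_of_two_legs hk hi (Ne.symm hik)
  exact three_edges_at p.walk p.isPath h1 h2 h3
    (fun h => hij (EE_inj.mp h)) (fun h => hik (EE_inj.mp h)) (fun h => hjk (EE_inj.mp h))
    (by rw [EE]; exact Sym2.mem_mk_left _ _) (by rw [EE]; exact Sym2.mem_mk_left _ _)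
    (by rw [EE]; exact Sym2.mem_mk_left _ _)

/-- The weight of a colored path at leg `i` (twice the fractional cost). -/
def gw (i : Fin q) (x : GPath (spider2 q) × Fin 3) : ℕ :=
  if i ∈ legs x.1 then (if (legs x.1).card ≤ 1 then 2 else 1) else 0

lemma sum_gw_le (x : GPath (spider2 q) × Fin 3) : ∑ i : Fin q, gw i x ≤ 2 := by
  have : ∑ i : Fin q, gw i x
      = ∑ i ∈ legs x.1, (if (legs x.1).card ≤ 1 then 2 else 1) := by
    unfold gw
    rw [Finset.sum_ite_mem, Finset.univ_inter]
  rw [this, Finset.sum_const, smul_eq_mul]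
  have h2 := legs_card_le_two x.1
  interval_cases h : (legs x.1).card <;> simp

/-- Twice the cost of a multiset of colored paths at leg `i`. -/
def ncost (P : Multiset (GPath (spider2 q) × Fin 3)) (i : Fin q) : ℕ :=
  (P.map (gw i)).sum

lemma sum_ncost_le (P : Multiset (GPath (spider2 q) × Fin 3)) :
    ∑ i : Fin q, ncost P i ≤ 2 * Multiset.card P := by
  induction P using Multiset.induction with
  | empty => simp [ncost]
  | cons x P ih =>
    have : ∀ i, ncost (x ::ₘ P) i = gw i x + ncost P i := by
      intro i; simp [ncost]
    simp only [this, Finset.sum_add_distrib, Multiset.card_cons]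
    calc ∑ i : Fin q, gw i x + ∑ i : Fin q, ncost P i ≤ 2 + 2 * Multiset.card P := by
          exact Nat.add_le_add (sum_gw_le x) ih
      _ = 2 * (Multiset.card P + 1) := by ring

section MultisetHelpers

variable {α : Type*}

lemma sum_map_le_of_le {s t : Multiset α} (f : α → ℕ) (h : s ≤ t) :
    (s.map f).sum ≤ (t.map f).sum := by
  obtain ⟨u, rfl⟩ := Multiset.le_iff_exists_add.mp h
  simp

lemma three_le {a b c : α} {P : Multiset α} (ha : a ∈ P) (hb : b ∈ P) (hc : c ∈ P)
    (hab : a ≠ b) (hac : a ≠ c) (hbc : b ≠ c) : a ::ₘ b ::ₘ c ::ₘ 0 ≤ P := by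
  classical
  rw [Multiset.le_iff_count]
  intro x
  by_cases hxa : x = a <;> by_cases hxb : x = b <;> by_cases hxc : x = c <;>
    subst_vars <;>
    simp_all [Multiset.count_cons, Multiset.one_le_count_iff_mem] <;> omega

end MultisetHelpers



lemma gw_one {i : Fin q} {x : GPath (spider2 q) × Fin 3} (h1 : gw i x = 1) :
    ∃ j, j ≠ i ∧ legs x.1 = {i, j} := by
  unfold gw at h1
  split_ifs at h1 with h h'
  · omega
  · have hcard : (legs x.1).card = 2 := le_antisymm (legs_card_le_two x.1) (by omega)
    obtain ⟨j, hj, hji⟩ := Finset.exists_mem_ne (s := legs x.1) (by omega) i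
    refine ⟨j, hji, ?_⟩
    refine (Finset.eq_of_subset_of_card_le ?_ ?_).symm
    · intro m hm
      simp only [Finset.mem_insert, Finset.mem_singleton] at hm
      rcases hm with rfl | rfl
      · exact h
      · exact hj
    · rw [hcard, Finset.card_insert_of_notMem
        (by simp only [Finset.mem_singleton]; exact fun h => hji h.symm),
        Finset.card_singleton]

lemma gw_singleton {i : Fin q} {x : GPath (spider2 q) × Fin 3}
    (hall : ∀ e ∈ x.1.walk.edges, e = FF i) (hF : FF i ∈ x.1.walk.edges) :
    gw i x = 2 := by
  have hlegs : legs x.1 = {i} := by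
    ext j
    simp only [mem_legs, Finset.mem_singleton]
    constructor
    · rintro (hj | hj)
      · exact absurd (hall _ hj) EE_ne_FF
      · exact FF_inj.mp (hall _ hj)
    · rintro rfl; exact Or.inr hF
  unfold gw
  rw [hlegs]
  simp

section Counting

variable {P : Multiset (GPath (spider2 q) × Fin 3)}

/-- The cheap-leg structure lemma: a leg of cost exactly 2 consists of a
singleton leaf path, a "long" path through both its edges into another leg `j`,
and a third path through its internal edge only, all distinctly colored. -/
lemma cheapStruct (hP : IsRSPS (spider2 q) 3 P)
    (hcov : ∀ e ∈ (spider2 q).edgeSet, ∃ p ∈ P, ∃ p' ∈ P, p.2 ≠ p'.2 ∧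
      e ∈ p.1.walk.edges ∧ e ∈ p'.1.walk.edges)
    (i : Fin q) (h4 : ncost P i ≤ 4) :
    ∃ (j : Fin q) (x0 L Q : GPath (spider2 q) × Fin 3)
      (R : Multiset (GPath (spider2 q) × Fin 3)),
      P = x0 ::ₘ L ::ₘ Q ::ₘ R ∧ j ≠ i ∧
      (∀ e ∈ x0.1.walk.edges, e = FF i) ∧ FF i ∈ x0.1.walk.edges ∧
      EE i ∈ L.1.walk.edges ∧ FF i ∈ L.1.walk.edges ∧ EE j ∈ L.1.walk.edges ∧
      (∀ e ∈ L.1.walk.edges, e = EE i ∨ e = FF i ∨ e = EE j ∨ e = FF j) ∧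
      EE i ∈ Q.1.walk.edges ∧ FF i ∉ Q.1.walk.edges ∧ EE j ∉ Q.1.walk.edges ∧
      (∀ z ∈ R, EE i ∉ z.1.walk.edges ∧ FF i ∉ z.1.walk.edges) ∧
      x0.2 ≠ L.2 ∧ x0.2 ≠ Q.2 ∧ L.2 ≠ Q.2 := by
  obtain ⟨y, hyP, x0, hx0P, hcolyx0, hyE, hyF, hx0F, hx0E⟩ :=
    hP (EE i) (FF i) (EE_mem_edgeSet i) (FF_mem_edgeSet i) EE_ne_FF
  have hx0all : ∀ e ∈ x0.1.walk.edges, e = FF i := all_edges_FF x0.1.walk hx0E hx0F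
  obtain ⟨y1, hy1P, y2, hy2P, hc12, hy1E, hy2E⟩ := hcov (EE i) (EE_mem_edgeSet i)
  have hy1x0 : y1 ≠ x0 := fun h => hx0E (h ▸ hy1E)
  have hy2x0 : y2 ≠ x0 := fun h => hx0E (h ▸ hy2E)
  have hy12 : y1 ≠ y2 := fun h => hc12 (by rw [h])
  obtain ⟨R, hR⟩ := Multiset.le_iff_exists_add.mp
    (three_le hx0P hy1P hy2P (Ne.symm hy1x0) (Ne.symm hy2x0) hy12)
  have hPd : P = x0 ::ₘ y1 ::ₘ y2 ::ₘ R := by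
    rw [hR]; simp [Multiset.cons_add]
  have hsum : ncost P i = gw i x0 + (gw i y1 + (gw i y2 + (R.map (gw i)).sum)) := by
    rw [hPd]; simp [ncost]
  have hgx0 : gw i x0 = 2 := gw_singleton hx0all hx0F
  have hgy1 : 1 ≤ gw i y1 := by
    unfold gw; rw [if_pos (mem_legs.mpr (Or.inl hy1E))]; split <;> omega
  have hgy2 : 1 ≤ gw i y2 := by
    unfold gw; rw [if_pos (mem_legs.mpr (Or.inl hy2E))]; split <;> omega
  have hgy1' : gw i y1 = 1 := by omega
  have hgy2' : gw i y2 = 1 := by omega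
  have hRsum : (R.map (gw i)).sum = 0 := by omega
  have hR0 : ∀ z ∈ R, EE i ∉ z.1.walk.edges ∧ FF i ∉ z.1.walk.edges := by
    intro z hz
    have hgz : gw i z = 0 := by
      have := Multiset.sum_eq_zero_iff.mp hRsum (gw i z) (Multiset.mem_map_of_mem _ hz)
      exact this
    have : i ∉ legs z.1 := by
      intro hmem
      unfold gw at hgz
      rw [if_pos hmem] at hgz
      split at hgz <;> omega
    rw [mem_legs] at this
    push_neg at this
    exact this
  have hmemid : ∀ z ∈ P, (EE i ∈ z.1.walk.edges ∨ FF i ∈ z.1.walk.edges) →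
      z = x0 ∨ z = y1 ∨ z = y2 := by
    intro z hz htouch
    rw [hPd] at hz
    rcases Multiset.mem_cons.mp hz with rfl | hz
    · exact Or.inl rfl
    rcases Multiset.mem_cons.mp hz with rfl | hz
    · exact Or.inr (Or.inl rfl)
    rcases Multiset.mem_cons.mp hz with rfl | hz
    · exact Or.inr (Or.inr rfl)
    · rcases htouch with h | h
      · exact absurd h (hR0 z hz).1
      · exact absurd h (hR0 z hz).2
  -- which of y1 y2 is y
  have hyy : y = y1 ∨ y = y2 := by
    rcases hmemid y hyP (Or.inl hyE) with rfl | h | h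
    · exact absurd hyE hx0E
    · exact Or.inl h
    · exact Or.inr h
  -- one of y1 y2 contains FF i
  have hcont : FF i ∈ y1.1.walk.edges ∨ FF i ∈ y2.1.walk.edges := by
    obtain ⟨x1, hx1P, x2, hx2P, hcx, hx1F, hx2F⟩ := hcov (FF i) (FF_mem_edgeSet i)
    rcases hmemid x1 hx1P (Or.inr hx1F) with rfl | h | h
    · rcases hmemid x2 hx2P (Or.inr hx2F) with rfl | h | h
      · exact absurd rfl hcx
      · exact Or.inl (h ▸ hx2F)
      · exact Or.inr (h ▸ hx2F)
    · exact Or.inl (h ▸ hx1F)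
    · exact Or.inr (h ▸ hx1F)
  -- main assembly, with Q := y and L := the other one
  have main : ∀ L Q : GPath (spider2 q) × Fin 3, P = x0 ::ₘ L ::ₘ Q ::ₘ R →
      gw i L = 1 → FF i ∈ L.1.walk.edges → EE i ∈ Q.1.walk.edges →
      FF i ∉ Q.1.walk.edges → x0.2 ≠ Q.2 → L.2 ≠ Q.2 →
      (∃ (j : Fin q) (x0 L Q : GPath (spider2 q) × Fin 3)
        (R : Multiset (GPath (spider2 q) × Fin 3)),
        P = x0 ::ₘ L ::ₘ Q ::ₘ R ∧ j ≠ i ∧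
        (∀ e ∈ x0.1.walk.edges, e = FF i) ∧ FF i ∈ x0.1.walk.edges ∧
        EE i ∈ L.1.walk.edges ∧ FF i ∈ L.1.walk.edges ∧ EE j ∈ L.1.walk.edges ∧
        (∀ e ∈ L.1.walk.edges, e = EE i ∨ e = FF i ∨ e = EE j ∨ e = FF j) ∧
        EE i ∈ Q.1.walk.edges ∧ FF i ∉ Q.1.walk.edges ∧ EE j ∉ Q.1.walk.edges ∧
        (∀ z ∈ R, EE i ∉ z.1.walk.edges ∧ FF i ∉ z.1.walk.edges) ∧
        x0.2 ≠ L.2 ∧ x0.2 ≠ Q.2 ∧ L.2 ≠ Q.2) := by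
    intro L Q hPd' hgL hLF hQE hQF hcxQ hcLQ
    have hmemid' : ∀ z ∈ P, (EE i ∈ z.1.walk.edges ∨ FF i ∈ z.1.walk.edges) →
        z = x0 ∨ z = L ∨ z = Q := by
      intro z hz htouch
      rw [hPd'] at hz
      rcases Multiset.mem_cons.mp hz with rfl | hz
      · exact Or.inl rfl
      rcases Multiset.mem_cons.mp hz with rfl | hz
      · exact Or.inr (Or.inl rfl)
      rcases Multiset.mem_cons.mp hz with rfl | hz
      · exact Or.inr (Or.inr rfl)
      · rcases htouch with h | h
        · exact absurd h (hR0 z hz).1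
        · exact absurd h (hR0 z hz).2
    obtain ⟨j, hji, hlegsL⟩ := gw_one hgL
    have hiL : i ∈ legs L.1 := by rw [hlegsL]; simp
    have hjL : j ∈ legs L.1 := by rw [hlegsL]; simp
    have hLE : EE i ∈ L.1.walk.edges := EE_mem_of_two_legs hiL hjL (Ne.symm hji)
    have hLEj : EE j ∈ L.1.walk.edges := EE_mem_of_two_legs hjL hiL hji
    have hLchar : ∀ e ∈ L.1.walk.edges, e = EE i ∨ e = FF i ∨ e = EE j ∨ e = FF j := by
      intro e he
      obtain ⟨m, hm | hm⟩ := edge_cases (L.1.walk.edges_subset_edgeSet he)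
      · have : m ∈ legs L.1 := mem_legs.mpr (Or.inl (hm ▸ he))
        rw [hlegsL] at this
        simp only [Finset.mem_insert, Finset.mem_singleton] at this
        rcases this with rfl | rfl
        · exact Or.inl hm
        · exact Or.inr (Or.inr (Or.inl hm))
      · have : m ∈ legs L.1 := mem_legs.mpr (Or.inr (hm ▸ he))
        rw [hlegsL] at this
        simp only [Finset.mem_insert, Finset.mem_singleton] at this
        rcases this with rfl | rfl
        · exact Or.inr (Or.inl hm)
        · exact Or.inr (Or.inr (Or.inr hm))
    -- EE j ∉ Q via separation of EE i from EE j
    have hQEj : EE j ∉ Q.1.walk.edges := by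
      obtain ⟨p, hpP, p', _, _, hpe, hpf, _, _⟩ :=
        hP (EE i) (EE j) (EE_mem_edgeSet i) (EE_mem_edgeSet j)
          (fun h => hji (EE_inj.mp h).symm)
      rcases hmemid' p hpP (Or.inl hpe) with rfl | rfl | rfl
      · exact absurd (hx0all _ hpe) EE_ne_FF
      · exact absurd hLEj hpf
      · exact hpf
    -- x0.2 ≠ L.2 via double coverage of FF i
    have hcxL : x0.2 ≠ L.2 := by
      obtain ⟨x1, hx1P, x2, hx2P, hcx, hx1F, hx2F⟩ := hcov (FF i) (FF_mem_edgeSet i)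
      have hid1 : x1.2 = x0.2 ∨ x1.2 = L.2 := by
        rcases hmemid' x1 hx1P (Or.inr hx1F) with rfl | rfl | rfl
        · exact Or.inl rfl
        · exact Or.inr rfl
        · exact absurd hx1F hQF
      have hid2 : x2.2 = x0.2 ∨ x2.2 = L.2 := by
        rcases hmemid' x2 hx2P (Or.inr hx2F) with rfl | rfl | rfl
        · exact Or.inl rfl
        · exact Or.inr rfl
        · exact absurd hx2F hQF
      intro heq
      rcases hid1 with h1 | h1 <;> rcases hid2 with h2 | h2
      · exact hcx (h1.trans h2.symm)
      · exact hcx (h1.trans (heq.trans h2.symm))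
      · exact hcx (h1.trans (heq.symm.trans h2.symm))
      · exact hcx (h1.trans h2.symm)
    exact ⟨j, x0, L, Q, R, hPd', hji, hx0all, hx0F, hLE, hLF, hLEj, hLchar,
      hQE, hQF, hQEj, hR0, hcxL, hcxQ, hcLQ⟩
  rcases hyy with rfl | rfl
  · -- y = y1 : Q := y1, L := y2
    have hLF : FF i ∈ y2.1.walk.edges := by
      rcases hcont with h | h
      · exact absurd h hyF
      · exact h
    refine main y2 y ?_ hgy2' hLF hyE hyF (Ne.symm hcolyx0) (Ne.symm hc12)
    rw [hPd, Multiset.cons_swap y y2 R]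
  · -- y = y2 : Q := y2, L := y1
    have hLF : FF i ∈ y1.1.walk.edges := by
      rcases hcont with h | h
      · exact h
      · exact absurd h hyF
    exact main y1 y hPd hgy1' hLF hyE hyF (Ne.symm hcolyx0) hc12


lemma fin3_absurd {a b c d : Fin 3} (hab : a ≠ b) (hac : a ≠ c) (hbc : b ≠ c)
    (hda : d ≠ a) (hdb : d ≠ b) (hdc : d ≠ c) : False := by
  revert hab hac hbc hda hdb hdc
  revert a b c d
  decide

lemma memid {i : Fin q} {x0 L Q : GPath (spider2 q) × Fin 3}
    {R : Multiset (GPath (spider2 q) × Fin 3)}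
    (hPd : P = x0 ::ₘ L ::ₘ Q ::ₘ R)
    (hR0 : ∀ z ∈ R, EE i ∉ z.1.walk.edges ∧ FF i ∉ z.1.walk.edges) :
    ∀ z ∈ P, (EE i ∈ z.1.walk.edges ∨ FF i ∈ z.1.walk.edges) →
      z = x0 ∨ z = L ∨ z = Q := by
  intro z hz htouch
  rw [hPd] at hz
  rcases Multiset.mem_cons.mp hz with rfl | hz
  · exact Or.inl rfl
  rcases Multiset.mem_cons.mp hz with rfl | hz
  · exact Or.inr (Or.inl rfl)
  rcases Multiset.mem_cons.mp hz with rfl | hz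
  · exact Or.inr (Or.inr rfl)
  · rcases htouch with h | h
    · exact absurd h (hR0 z hz).1
    · exact absurd h (hR0 z hz).2

/-- The partner of a cheap leg is not cheap. -/
lemma partner_not_cheap (hP : IsRSPS (spider2 q) 3 P)
    (hcov : ∀ e ∈ (spider2 q).edgeSet, ∃ p ∈ P, ∃ p' ∈ P, p.2 ≠ p'.2 ∧
      e ∈ p.1.walk.edges ∧ e ∈ p'.1.walk.edges)
    {i j : Fin q} {x0 L Q : GPath (spider2 q) × Fin 3}
    {R : Multiset (GPath (spider2 q) × Fin 3)}
    (hPd : P = x0 ::ₘ L ::ₘ Q ::ₘ R) (hji : j ≠ i)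
    (hx0all : ∀ e ∈ x0.1.walk.edges, e = FF i)
    (hLE : EE i ∈ L.1.walk.edges) (hLF : FF i ∈ L.1.walk.edges)
    (hLEj : EE j ∈ L.1.walk.edges)
    (hQE : EE i ∈ Q.1.walk.edges) (hQF : FF i ∉ Q.1.walk.edges)
    (hR0 : ∀ z ∈ R, EE i ∉ z.1.walk.edges ∧ FF i ∉ z.1.walk.edges)
    (hab : x0.2 ≠ L.2) (hac : x0.2 ≠ Q.2) (hbc : L.2 ≠ Q.2)
    (h4j : ncost P j ≤ 4) : False := by
  obtain ⟨j2, x0', L', Q', R', hPd', hj2j, hx0'all, hx0'F, hL'E, hL'F, hL'Ej2,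
    hL'char, hQ'E, hQ'F, hQ'Ej2, hR0', hab', hac', hbc'⟩ := cheapStruct hP hcov j h4j
  have memidI := memid (P := P) hPd hR0
  have memidJ := memid (P := P) hPd' hR0'
  have hx0EI : EE i ∉ x0.1.walk.edges := fun h => EE_ne_FF (hx0all _ h)
  have hx0'EJ : EE j ∉ x0'.1.walk.edges := fun h => EE_ne_FF (hx0'all _ h)
  have hLmem : L ∈ P := by rw [hPd]; exact Multiset.mem_cons_of_mem (Multiset.mem_cons_self _ _)
  have hLcase : L = L' ∨ L = Q' := by
    rcases memidJ L hLmem (Or.inl hLEj) with h | h | h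
    · exact absurd (hx0'all _ (h ▸ hLEj)) EE_ne_FF
    · exact Or.inl h
    · exact Or.inr h
  have hFiFj : FF i ≠ FF j := fun h => hji (FF_inj.mp h).symm
  have hEiEj : EE i ≠ EE j := fun h => hji (EE_inj.mp h).symm
  rcases hLcase with rfl | rfl
  · -- L = L' (so L plays both roles)
    have haa' : x0.2 ≠ x0'.2 := by
      obtain ⟨p, hpP, qq, hqqP, hcol, hpe, hpf, hqf, hqe⟩ :=
        hP (FF i) (FF j) (FF_mem_edgeSet i) (FF_mem_edgeSet j) hFiFj
      have hpid : p = x0 := by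
        rcases memidI p hpP (Or.inr hpe) with h | h | h
        · exact h
        · exact absurd (h ▸ hL'F : FF j ∈ p.1.walk.edges) hpf
        · exact absurd (h ▸ hpe) hQF
      have hqid : qq = x0' := by
        rcases memidJ qq hqqP (Or.inr hqf) with h | h | h
        · exact h
        · exact absurd (h ▸ hLF : FF i ∈ qq.1.walk.edges) hqe
        · exact absurd (h ▸ hqf) hQ'F
      rw [hpid, hqid] at hcol; exact hcol
    have hca' : Q.2 ≠ x0'.2 := by
      obtain ⟨p, hpP, qq, hqqP, hcol, hpe, hpf, hqf, hqe⟩ :=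
        hP (EE i) (FF j) (EE_mem_edgeSet i) (FF_mem_edgeSet j) EE_ne_FF
      have hpid : p = Q := by
        rcases memidI p hpP (Or.inl hpe) with h | h | h
        · exact absurd (h ▸ hpe) hx0EI
        · exact absurd (h ▸ hL'F : FF j ∈ p.1.walk.edges) hpf
        · exact h
      have hqid : qq = x0' := by
        rcases memidJ qq hqqP (Or.inr hqf) with h | h | h
        · exact h
        · exact absurd (h ▸ hLE : EE i ∈ qq.1.walk.edges) hqe
        · exact absurd (h ▸ hqf) hQ'F
      rw [hpid, hqid] at hcol; exact hcol
    exact fin3_absurd hab hac hbc (Ne.symm haa') hab' (Ne.symm hca')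
  · -- L = Q'
    have hcb' : Q.2 ≠ L'.2 := by
      obtain ⟨p, hpP, qq, hqqP, hcol, hpe, hpf, hqf, hqe⟩ :=
        hP (EE i) (EE j) (EE_mem_edgeSet i) (EE_mem_edgeSet j) hEiEj
      have hpid : p = Q := by
        rcases memidI p hpP (Or.inl hpe) with h | h | h
        · exact absurd (h ▸ hpe) hx0EI
        · exact absurd (h ▸ hLEj : EE j ∈ p.1.walk.edges) hpf
        · exact h
      have hqid : qq = L' := by
        rcases memidJ qq hqqP (Or.inl hqf) with h | h | h
        · exact absurd (h ▸ hqf) hx0'EJ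
        · exact h
        · exact absurd (h ▸ hLE : EE i ∈ qq.1.walk.edges) hqe
      rw [hpid, hqid] at hcol; exact hcol
    have hab'' : x0.2 ≠ L'.2 := by
      obtain ⟨p, hpP, qq, hqqP, hcol, hpe, hpf, hqf, hqe⟩ :=
        hP (FF i) (EE j) (FF_mem_edgeSet i) (EE_mem_edgeSet j) (Ne.symm EE_ne_FF)
      have hpid : p = x0 := by
        rcases memidI p hpP (Or.inr hpe) with h | h | h
        · exact h
        · exact absurd (h ▸ hLEj : EE j ∈ p.1.walk.edges) hpf
        · exact absurd (h ▸ hpe) hQF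
      have hqid : qq = L' := by
        rcases memidJ qq hqqP (Or.inl hqf) with h | h | h
        · exact absurd (h ▸ hqf) hx0'EJ
        · exact h
        · exact absurd (h ▸ hLF : FF i ∈ qq.1.walk.edges) hqe
      rw [hpid, hqid] at hcol; exact hcol
    exact fin3_absurd hab hac hbc (Ne.symm hab'') hbc' (Ne.symm hcb')

lemma sing_exists (hP : IsRSPS (spider2 q) 3 P) (i : Fin q) :
    ∃ x ∈ P, FF i ∈ x.1.walk.edges ∧ ∀ e ∈ x.1.walk.edges, e = FF i := by
  obtain ⟨p, hpP, qq, hqqP, hcol, hpe, hpf, hqf, hqe⟩ :=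
    hP (EE i) (FF i) (EE_mem_edgeSet i) (FF_mem_edgeSet i) EE_ne_FF
  exact ⟨qq, hqqP, hqf, all_edges_FF qq.1.walk hqe hqf⟩

lemma ncost_ge_four (hP : IsRSPS (spider2 q) 3 P)
    (hcov : ∀ e ∈ (spider2 q).edgeSet, ∃ p ∈ P, ∃ p' ∈ P, p.2 ≠ p'.2 ∧
      e ∈ p.1.walk.edges ∧ e ∈ p'.1.walk.edges)
    (i : Fin q) : 4 ≤ ncost P i := by
  obtain ⟨y, hyP, x0, hx0P, hcolyx0, hyE, hyF, hx0F, hx0E⟩ :=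
    hP (EE i) (FF i) (EE_mem_edgeSet i) (FF_mem_edgeSet i) EE_ne_FF
  have hx0all : ∀ e ∈ x0.1.walk.edges, e = FF i := all_edges_FF x0.1.walk hx0E hx0F
  obtain ⟨y1, hy1P, y2, hy2P, hc12, hy1E, hy2E⟩ := hcov (EE i) (EE_mem_edgeSet i)
  have hy1x0 : y1 ≠ x0 := fun h => hx0E (h ▸ hy1E)
  have hy2x0 : y2 ≠ x0 := fun h => hx0E (h ▸ hy2E)
  have hy12 : y1 ≠ y2 := fun h => hc12 (by rw [h])
  have hle := three_le hx0P hy1P hy2P (Ne.symm hy1x0) (Ne.symm hy2x0) hy12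
  have hmono := sum_map_le_of_le (gw i) hle
  have hgx0 : gw i x0 = 2 := gw_singleton hx0all hx0F
  have hgy1 : 1 ≤ gw i y1 := by
    unfold gw; rw [if_pos (mem_legs.mpr (Or.inl hy1E))]; split <;> omega
  have hgy2 : 1 ≤ gw i y2 := by
    unfold gw; rw [if_pos (mem_legs.mpr (Or.inl hy2E))]; split <;> omega
  have heq : ((x0 ::ₘ y1 ::ₘ y2 ::ₘ 0).map (gw i)).sum = gw i x0 + gw i y1 + gw i y2 := by
    simp [add_assoc]
  unfold ncost
  omega

/-- The main counting bound. -/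
lemma count_main (hP : IsRSPS (spider2 q) 3 P)
    (hcov : ∀ e ∈ (spider2 q).edgeSet, ∃ p ∈ P, ∃ p' ∈ P, p.2 ≠ p'.2 ∧
      e ∈ p.1.walk.edges ∧ e ∈ p'.1.walk.edges) :
    17 * q ≤ 8 * Multiset.card P := by
  classical
  have junk : GPath (spider2 q) × Fin 3 :=
    ⟨⟨none, none, SimpleGraph.Walk.nil, SimpleGraph.Walk.IsPath.nil⟩, 0⟩
  have hstruct : ∀ i : Fin q, ∃ (j : Fin q) (x0 L Q : GPath (spider2 q) × Fin 3)
      (R : Multiset (GPath (spider2 q) × Fin 3)), ncost P i ≤ 4 →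
      (P = x0 ::ₘ L ::ₘ Q ::ₘ R ∧ j ≠ i ∧
      (∀ e ∈ x0.1.walk.edges, e = FF i) ∧ FF i ∈ x0.1.walk.edges ∧
      EE i ∈ L.1.walk.edges ∧ FF i ∈ L.1.walk.edges ∧ EE j ∈ L.1.walk.edges ∧
      (∀ e ∈ L.1.walk.edges, e = EE i ∨ e = FF i ∨ e = EE j ∨ e = FF j) ∧
      EE i ∈ Q.1.walk.edges ∧ FF i ∉ Q.1.walk.edges ∧ EE j ∉ Q.1.walk.edges ∧
      (∀ z ∈ R, EE i ∉ z.1.walk.edges ∧ FF i ∉ z.1.walk.edges) ∧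
      x0.2 ≠ L.2 ∧ x0.2 ≠ Q.2 ∧ L.2 ≠ Q.2) := by
    intro i
    by_cases h : ncost P i ≤ 4
    · obtain ⟨j, x0, L, Q, R, props⟩ := cheapStruct hP hcov i h
      exact ⟨j, x0, L, Q, R, fun _ => props⟩
    · exact ⟨i, junk, junk, junk, 0, fun hc => absurd hc h⟩
  choose ptn x0f Lf Qf Rf hprops using hstruct
  set C := Finset.univ.filter (fun i : Fin q => ncost P i ≤ 4) with hC
  have hmemC : ∀ i : Fin q, i ∈ C ↔ ncost P i ≤ 4 := by
    intro i; simp [hC]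
  -- the key per-leg inequality
  have key : ∀ j : Fin q, 17 + (C.filter (fun i => ptn i = j)).card
      ≤ 4 * ncost P j + (if j ∈ C then 1 else 0) := by
    intro j
    by_cases hj : j ∈ C
    · -- cheap leg: its fiber is empty
      have hfib : C.filter (fun i => ptn i = j) = ∅ := by
        rw [Finset.eq_empty_iff_forall_notMem]
        intro i hi
        rw [Finset.mem_filter] at hi
        obtain ⟨hiC, hptn⟩ := hi
        obtain ⟨hPd, hji, hx0all, hx0F, hLE, hLF, hLEj, hLchar, hQE, hQF, hQEj,
          hR0, hab, hac, hbc⟩ := hprops i ((hmemC i).mp hiC)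
        rw [hptn] at hji hLEj hQEj
        exact partner_not_cheap hP hcov hPd hji hx0all hLE hLF hLEj hQE hQF hR0
          hab hac hbc ((hmemC j).mp hj)
      rw [hfib, if_pos hj]
      have h4 := ncost_ge_four hP hcov j
      simp only [Finset.card_empty]
      omega
    · -- expensive leg
      rw [if_neg hj]
      have h5 : 5 ≤ ncost P j := by
        have := (hmemC j).not
        rw [this] at hj
        omega
      have ht : 2 + (C.filter (fun i => ptn i = j)).card ≤ ncost P j := by
        obtain ⟨x0j, hx0jP, hx0jF, hx0jall⟩ := sing_exists hP j
        set fib := C.filter (fun i => ptn i = j) with hfib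
        have hfibprop : ∀ i ∈ fib, ncost P i ≤ 4 ∧ ptn i = j := by
          intro i hi
          rw [hfib, Finset.mem_filter] at hi
          exact ⟨(hmemC i).mp hi.1, hi.2⟩
        -- each cheap i in the fiber contributes its long path Lf i
        have hLmem : ∀ i ∈ fib, Lf i ∈ P := by
          intro i hi
          obtain ⟨hPd, _⟩ := hprops i (hfibprop i hi).1
          rw [hPd]
          exact Multiset.mem_cons_of_mem (Multiset.mem_cons_self _ _)
        have hinj : ∀ i ∈ fib, ∀ i' ∈ fib, Lf i = Lf i' → i = i' := by
          intro i hi i' hi' heq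
          obtain ⟨hPd, hji, hx0all, hx0F, hLE, hLF, hrest⟩ :=
            hprops i (hfibprop i hi).1
          obtain ⟨hPd', hji', hx0all', hx0F', hLE', hLF', hLEj', hLchar', hrest'⟩ :=
            hprops i' (hfibprop i' hi').1
          have hFi : FF i ∈ (Lf i').1.walk.edges := heq ▸ hLF
          rcases hLchar' _ hFi with h | h | h | h
          · exact absurd h.symm EE_ne_FF
          · exact FF_inj.mp h
          · exact absurd h.symm EE_ne_FF
          · -- FF i = FF (ptn i') = FF j, but i is cheap and j is not
            have hij : i = j := by
              rw [(hfibprop i' hi').2] at h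
              exact FF_inj.mp h
            have hiC : i ∈ C := by
              rw [hfib] at hi
              exact (Finset.mem_filter.mp hi).1
            rw [hij] at hiC
            exact absurd hiC hj
        -- the submultiset
        set S : Multiset (GPath (spider2 q) × Fin 3) := x0j ::ₘ fib.val.map Lf with hS
        have hnodup : S.Nodup := by
          rw [hS, Multiset.nodup_cons]
          constructor
          · intro hmem
            obtain ⟨i, hi, heq⟩ := Multiset.mem_map.mp hmem
            obtain ⟨hPd, hji, hx0all, hx0F, hLE, hrest⟩ := hprops i (hfibprop i (Finset.mem_def.mpr hi)).1
            have : EE i ∈ x0j.1.walk.edges := heq ▸ hLE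
            exact EE_ne_FF (hx0jall _ this)
          · exact Multiset.Nodup.map_on (fun i hi i' hi' => hinj i (Finset.mem_def.mpr hi) i' (Finset.mem_def.mpr hi')) fib.nodup
        have hsub : S ≤ P := by
          rw [Multiset.le_iff_subset hnodup]
          intro a ha
          rw [hS, Multiset.mem_cons] at ha
          rcases ha with rfl | ha
          · exact hx0jP
          · obtain ⟨i, hi, heq⟩ := Multiset.mem_map.mp ha
            exact heq ▸ hLmem i (Finset.mem_def.mpr hi)
        have hmono := sum_map_le_of_le (gw j) hsub
        have hgx0j : gw j x0j = 2 := gw_singleton hx0jall hx0jF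
        have hgL : ∀ i ∈ fib, 1 ≤ gw j (Lf i) := by
          intro i hi
          obtain ⟨hPd, hji, hx0all, hx0F, hLE, hLF, hLEj, hrest⟩ :=
            hprops i (hfibprop i hi).1
          rw [(hfibprop i hi).2] at hLEj
          unfold gw
          rw [if_pos (mem_legs.mpr (Or.inl hLEj))]
          split <;> omega
        have hsum : 2 + fib.card ≤ (S.map (gw j)).sum := by
          rw [hS, Multiset.map_cons, Multiset.sum_cons, hgx0j, Multiset.map_map]
          have hge : ∀ x ∈ fib.val.map (gw j ∘ Lf), 1 ≤ x := by
            intro x hx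
            obtain ⟨i, hi, heq⟩ := Multiset.mem_map.mp hx
            exact heq ▸ hgL i (Finset.mem_def.mpr hi)
          have hcard : Multiset.card (fib.val.map (gw j ∘ Lf)) = fib.card := by
            rw [Multiset.card_map]; rfl
          have hsumge : Multiset.card (fib.val.map (gw j ∘ Lf)) * 1
              ≤ (fib.val.map (gw j ∘ Lf)).sum := by
            have := Multiset.card_nsmul_le_sum hge
            simpa using this
          omega
        unfold ncost
        omega
      omega
  -- sum the key inequality over all legs
  have hsum1 : ∑ j : Fin q, (17 + (C.filter (fun i => ptn i = j)).card)
      ≤ ∑ j : Fin q, (4 * ncost P j + (if j ∈ C then 1 else 0)) :=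
    Finset.sum_le_sum (fun j _ => key j)
  have hfibsum : ∑ j : Fin q, (C.filter (fun i => ptn i = j)).card = C.card :=
    (Finset.card_eq_sum_card_fiberwise (fun i _ => Finset.mem_univ (ptn i))).symm
  have hitesum : ∑ j : Fin q, (if j ∈ C then 1 else 0) = C.card := by
    rw [Finset.sum_ite_mem, Finset.univ_inter, Finset.sum_const, smul_eq_mul, mul_one]
  rw [Finset.sum_add_distrib, Finset.sum_add_distrib, hfibsum, hitesum,
    Finset.sum_const, Finset.card_univ, Fintype.card_fin, smul_eq_mul] at hsum1
  have hnc := sum_ncost_le P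
  have hmul : ∑ j : Fin q, 4 * ncost P j = 4 * ∑ j : Fin q, ncost P j := by
    rw [Finset.mul_sum]
  omega

end Counting



section Construction

lemma adj_center (i : Fin q) : (spider2 q).Adj none (some (i, 0)) := by
  rw [adj_iff]; exact ⟨i, Or.inl ⟨rfl, rfl⟩⟩

lemma adj_leaf (i : Fin q) : (spider2 q).Adj (some (i, 0)) (some (i, 1)) := by
  rw [adj_iff]; exact ⟨i, Or.inr (Or.inr (Or.inl ⟨rfl, rfl⟩))⟩

def pathE (i : Fin q) : GPath (spider2 q) :=
  ⟨none, some (i, 0), SimpleGraph.Walk.cons (adj_center i) SimpleGraph.Walk.nil, by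
    rw [SimpleGraph.Walk.cons_isPath_iff]
    exact ⟨SimpleGraph.Walk.IsPath.nil, by simp⟩⟩

def pathF (i : Fin q) : GPath (spider2 q) :=
  ⟨some (i, 0), some (i, 1), SimpleGraph.Walk.cons (adj_leaf i) SimpleGraph.Walk.nil, by
    rw [SimpleGraph.Walk.cons_isPath_iff]
    exact ⟨SimpleGraph.Walk.IsPath.nil, by simp⟩⟩

lemma pathE_edges (i : Fin q) : (pathE i).walk.edges = [EE i] := rfl

lemma pathF_edges (i : Fin q) : (pathF i).walk.edges = [FF i] := rfl

/-- There is always some 3-RSPS of the spider. -/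
lemma exists_RSPS : ∃ P0 : Multiset (GPath (spider2 q) × Fin 3),
    IsRSPS (spider2 q) 3 P0 := by
  classical
  set P0 : Multiset (GPath (spider2 q) × Fin 3) :=
    (Finset.univ : Finset (Fin q)).val.bind (fun i =>
      {(pathE i, 0), (pathE i, 1), (pathF i, 0), (pathF i, 1)}) with hP0
  have hget : ∀ e ∈ (spider2 q).edgeSet, ∃ g : GPath (spider2 q),
      (g, (0 : Fin 3)) ∈ P0 ∧ (g, (1 : Fin 3)) ∈ P0 ∧ g.walk.edges = [e] := by
    intro e he
    obtain ⟨i, rfl | rfl⟩ := edge_cases he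
    · refine ⟨pathE i, ?_, ?_, pathE_edges i⟩ <;>
        · rw [hP0, Multiset.mem_bind]
          exact ⟨i, by simp, by simp⟩
    · refine ⟨pathF i, ?_, ?_, pathF_edges i⟩ <;>
        · rw [hP0, Multiset.mem_bind]
          exact ⟨i, by simp, by simp⟩
  refine ⟨P0, ?_⟩
  intro e f he hf hne
  obtain ⟨ge, hge0, hge1, hgee⟩ := hget e he
  obtain ⟨gf, hgf0, hgf1, hgff⟩ := hget f hf
  refine ⟨(ge, 0), hge0, (gf, 1), hgf1, (by decide : (0 : Fin 3) ≠ 1), ?_, ?_, ?_, ?_⟩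
  · rw [hgee]; exact List.mem_singleton.mpr rfl
  · rw [hgee]; intro h; exact hne (List.mem_singleton.mp h).symm
  · rw [hgff]; exact List.mem_singleton.mpr rfl
  · rw [hgff]; intro h; exact hne (List.mem_singleton.mp h)

end Construction

end Stmt13

/-- For the spider with `q ≥ 3` legs, all of length 2
(`n = 2q+1` vertices): any 3-RSPS in which every edge is covered by paths of at
least two distinct colors has size at least `17(n−1)/16`; consequently
`c_3(S) ≥ 17(n−1)/16 − 3`. -/
theorem stmt13 (q n : ℕ) (hq : 3 ≤ q) (hn : n = 2 * q + 1) :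
    (∀ P : Multiset (GPath (spider2 q) × Fin 3), IsRSPS (spider2 q) 3 P →
      (∀ e ∈ (spider2 q).edgeSet, ∃ p ∈ P, ∃ p' ∈ P, p.2 ≠ p'.2 ∧
        e ∈ p.1.walk.edges ∧ e ∈ p'.1.walk.edges) →
      17 * ((n : ℝ) - 1) / 16 ≤ (Multiset.card P : ℝ)) ∧
    17 * ((n : ℝ) - 1) / 16 - 3 ≤ (cRSPS (spider2 q) 3 : ℝ) := by
  classical
  have part1 : ∀ P : Multiset (GPath (spider2 q) × Fin 3), IsRSPS (spider2 q) 3 P →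
      (∀ e ∈ (spider2 q).edgeSet, ∃ p ∈ P, ∃ p' ∈ P, p.2 ≠ p'.2 ∧
        e ∈ p.1.walk.edges ∧ e ∈ p'.1.walk.edges) →
      17 * q ≤ 8 * Multiset.card P := fun P hP hcov => Stmt13.count_main hP hcov
  subst hn
  constructor
  · intro P hP hcov
    have h := part1 P hP hcov
    have h' : (17 * (q : ℝ)) ≤ 8 * (Multiset.card P : ℝ) := by exact_mod_cast h
    push_cast
    rw [div_le_iff₀ (by norm_num : (0:ℝ) < 16)]
    linarith
  · obtain ⟨P0, hP0⟩ := Stmt13.exists_RSPS (q := q)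
    have hne : {m | ∃ P : Multiset (GPath (spider2 q) × Fin 3),
        IsRSPS (spider2 q) 3 P ∧ Multiset.card P = m}.Nonempty := ⟨_, P0, hP0, rfl⟩
    obtain ⟨P, hPr, hcard⟩ := Nat.sInf_mem hne
    -- every edge is covered by some path of `P`
    have hcover1 : ∀ e ∈ (spider2 q).edgeSet, ∃ x ∈ P, e ∈ x.1.walk.edges := by
      intro e he
      have h2 : ∃ f ∈ (spider2 q).edgeSet, f ≠ e := by
        by_cases h : e = Stmt13.EE (⟨0, by omega⟩ : Fin q)
        · refine ⟨Stmt13.EE ⟨1, by omega⟩, Stmt13.EE_mem_edgeSet _, ?_⟩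
          rw [h]
          intro hh
          have := Stmt13.EE_inj.mp hh
          simp [Fin.ext_iff] at this
        · exact ⟨Stmt13.EE ⟨0, by omega⟩, Stmt13.EE_mem_edgeSet _, fun hh => h hh.symm⟩
      obtain ⟨f, hf, hfe⟩ := h2
      obtain ⟨p, hpP, _, _, _, hpe, _, _, _⟩ := hPr e f he hf (fun hh => hfe hh.symm)
      exact ⟨p, hpP, hpe⟩
    -- the set of monochromatic edges
    set M := (spider2 q).edgeFinset.filter
      (fun e => ¬ ∃ x ∈ P, ∃ y ∈ P, x.2 ≠ y.2 ∧
        e ∈ x.1.walk.edges ∧ e ∈ y.1.walk.edges) with hM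
    have hcolex : ∀ e : Sym2 (Stmt13.VV q), ∃ c : Fin 3, e ∈ M →
        ((∀ x ∈ P, e ∈ x.1.walk.edges → x.2 = c) ∧ ∃ x ∈ P, e ∈ x.1.walk.edges ∧ x.2 = c) := by
      intro e
      by_cases hm : e ∈ M
      · have hm' := hm
        rw [hM, Finset.mem_filter] at hm'
        obtain ⟨heF, hnot⟩ := hm'
        have he : e ∈ (spider2 q).edgeSet := SimpleGraph.mem_edgeFinset.mp heF
        obtain ⟨x, hxP, hxe⟩ := hcover1 e he
        refine ⟨x.2, fun _ => ⟨?_, x, hxP, hxe, rfl⟩⟩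
        intro y hyP hye
        by_contra hne2
        exact hnot ⟨y, hyP, x, hxP, hne2, hye, hxe⟩
      · exact ⟨0, fun h => absurd h hm⟩
    choose colfn hcolfn using hcolex
    have hMcard : M.card ≤ 3 := by
      have hinj : M.card ≤ (Finset.univ : Finset (Fin 3)).card := by
        apply Finset.card_le_card_of_injOn colfn (fun _ _ => Finset.mem_univ _)
        intro e heM e' heM' heq
        rw [Finset.mem_coe] at heM heM'
        by_contra hnee
        obtain ⟨hall, x, hxP, hxe, _⟩ := hcolfn e heM
        obtain ⟨hall', x', hxP', hxe', _⟩ := hcolfn e' heM'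
        have he : e ∈ (spider2 q).edgeSet := by
          have := heM; rw [hM, Finset.mem_filter] at this
          exact SimpleGraph.mem_edgeFinset.mp this.1
        have he' : e' ∈ (spider2 q).edgeSet := by
          have := heM'; rw [hM, Finset.mem_filter] at this
          exact SimpleGraph.mem_edgeFinset.mp this.1
        obtain ⟨p, hpP, qq, hqqP, hcolpq, hpe, hpf, hqf, hqe⟩ := hPr e e' he he' hnee
        have h1 := hall p hpP hpe
        have h2 := hall' qq hqqP hqf
        rw [h1, h2] at hcolpq
        exact hcolpq heq
      simpa using hinj
    -- single-edge paths
    have hspex : ∀ e : Sym2 (Stmt13.VV q), ∃ g : GPath (spider2 q),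
        e ∈ (spider2 q).edgeSet → g.walk.edges = [e] := by
      intro e
      by_cases he : e ∈ (spider2 q).edgeSet
      · obtain ⟨i, rfl | rfl⟩ := Stmt13.edge_cases he
        · exact ⟨Stmt13.pathE i, fun _ => Stmt13.pathE_edges i⟩
        · exact ⟨Stmt13.pathF i, fun _ => Stmt13.pathF_edges i⟩
      · exact ⟨Stmt13.pathE ⟨0, by omega⟩, fun h => absurd h he⟩
    choose sp hsp using hspex
    set extra := M.val.map (fun e => (sp e, colfn e + 1)) with hextra
    set P' := P + extra with hP'def
    have hP'r : IsRSPS (spider2 q) 3 P' := by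
      intro e f he hf hne2
      obtain ⟨p, hpP, qq, hqqP, h1, h2, h3, h4, h5⟩ := hPr e f he hf hne2
      exact ⟨p, Multiset.mem_add.mpr (Or.inl hpP), qq,
        Multiset.mem_add.mpr (Or.inl hqqP), h1, h2, h3, h4, h5⟩
    have hsucc : ∀ c : Fin 3, c ≠ c + 1 := by decide
    have hP'cov : ∀ e ∈ (spider2 q).edgeSet, ∃ p ∈ P', ∃ p' ∈ P', p.2 ≠ p'.2 ∧
        e ∈ p.1.walk.edges ∧ e ∈ p'.1.walk.edges := by
      intro e he
      by_cases hm : e ∈ M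
      · obtain ⟨hall, x, hxP, hxe, hx2⟩ := hcolfn e hm
        refine ⟨x, Multiset.mem_add.mpr (Or.inl hxP), (sp e, colfn e + 1),
          Multiset.mem_add.mpr (Or.inr ?_), ?_, hxe, ?_⟩
        · rw [hextra]
          exact Multiset.mem_map_of_mem _ (Finset.mem_def.mp hm)
        · rw [hx2]; exact hsucc (colfn e)
        · show e ∈ (sp e).walk.edges
          rw [hsp e he]
          exact List.mem_singleton.mpr rfl
      · have heF : e ∈ (spider2 q).edgeFinset := SimpleGraph.mem_edgeFinset.mpr he
        have htc : ∃ x ∈ P, ∃ y ∈ P, x.2 ≠ y.2 ∧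
            e ∈ x.1.walk.edges ∧ e ∈ y.1.walk.edges := by
          by_contra hno
          exact hm (by rw [hM, Finset.mem_filter]; exact ⟨heF, hno⟩)
        obtain ⟨x, hxP, y, hyP, h1, h2, h3⟩ := htc
        exact ⟨x, Multiset.mem_add.mpr (Or.inl hxP), y,
          Multiset.mem_add.mpr (Or.inl hyP), h1, h2, h3⟩
    have h17 := part1 P' hP'r hP'cov
    have hcardP' : Multiset.card P' ≤ Multiset.card P + 3 := by
      rw [hP'def, Multiset.card_add]
      have : Multiset.card extra = M.card := by rw [hextra, Multiset.card_map]; rfl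
      omega
    have hfinal : 17 * q ≤ 8 * (cRSPS (spider2 q) 3 + 3) := by
      have hcR : cRSPS (spider2 q) 3 = Multiset.card P := by
        rw [cRSPS]; exact hcard.symm
      rw [hcR]
      omega
    have h' : (17 * (q : ℝ)) ≤ 8 * ((cRSPS (spider2 q) 3 : ℝ) + 3) := by
      exact_mod_cast hfinal
    push_cast
    linarith
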